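/- (Hörmander condition) Let 𝔤 be the smallest ℝ-linear subspace of the space of smooth vector fields on ℝ^N that contains D_0, D_1, …, D_n and is closed under the Lie bracket operation. Then for every φ ∈ ℝ^N, the set of vectors {W(φ) : W ∈ 𝔤} spans all of ℝ^N. -/

import Mathlib

open scoped BigOperators

noncomputable section

/-- Vector fields on `ℝ^N`. -/
abbrev VF (N : ℕ) := (Fin N → ℝ) → Fin N → ℝ

/-- The Lie bracket `[V,W](φ) = DW(φ)(V(φ)) − DV(φ)(W(φ))` of vector fields. -/
def lieBracket {N : ℕ} (V W : VF N) : VF N :=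
  fun φ => fderiv ℝ W φ (V φ) - fderiv ℝ V φ (W φ)

/-- The drift vector field `D₀`. -/
def Dfield0 {N : ℕ} (lam μ : ℝ) (k : ℕ) : VF N :=
  fun φ i => (lam - (k : ℝ) * μ ^ 2 / 2) * φ i + lam

/-- The diffusion vector fields `D_j`, `1 ≤ j ≤ n`. -/
def DfieldJ {n N : ℕ} (μ : ℝ) (S : Fin N → Finset (Fin n)) (j : Fin n) : VF N :=
  fun φ i => (μ / Real.sqrt 2) * (φ i * if j ∈ S i then 1 else 0)

/-- `DfieldJ` as a continuous linear map. -/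
def maskCLM {n N : ℕ} (μ : ℝ) (S : Fin N → Finset (Fin n)) (j : Fin n) :
    (Fin N → ℝ) →L[ℝ] (Fin N → ℝ) :=
  ContinuousLinearMap.pi fun i =>
    ((μ / Real.sqrt 2) * if j ∈ S i then 1 else 0) • ContinuousLinearMap.proj i

lemma dfieldJ_eq_maskCLM {n N : ℕ} (μ : ℝ) (S : Fin N → Finset (Fin n)) (j : Fin n) :
    DfieldJ μ S j = fun φ => maskCLM μ S j φ := by
  funext φ i
  simp only [DfieldJ, maskCLM, ContinuousLinearMap.pi_apply,
    ContinuousLinearMap.smul_apply, ContinuousLinearMap.proj_apply, smul_eq_mul]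
  ring

lemma fderiv_dfieldJ {n N : ℕ} (μ : ℝ) (S : Fin N → Finset (Fin n)) (j : Fin n)
    (φ : Fin N → ℝ) :
    fderiv ℝ (DfieldJ μ S j) φ = maskCLM μ S j := by
  rw [dfieldJ_eq_maskCLM]
  exact (maskCLM μ S j).fderiv

lemma hasFDerivAt_dfield0 {N : ℕ} (lam μ : ℝ) (k : ℕ) (φ : Fin N → ℝ) :
    HasFDerivAt (Dfield0 (N := N) lam μ k)
      ((lam - (k : ℝ) * μ ^ 2 / 2) • ContinuousLinearMap.id ℝ (Fin N → ℝ)) φ := by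
  have h : Dfield0 (N := N) lam μ k
      = fun ψ => (lam - (k : ℝ) * μ ^ 2 / 2) • ψ + Function.const (Fin N) lam := by
    funext ψ i
    simp [Dfield0, Function.const]
  rw [h]
  exact ((hasFDerivAt_id (𝕜 := ℝ) φ).const_smul (lam - (k : ℝ) * μ ^ 2 / 2)).add_const _

lemma bracket_D0_DJ {n N : ℕ} (lam μ : ℝ) (k : ℕ) (S : Fin N → Finset (Fin n)) (j : Fin n) :
    lieBracket (Dfield0 lam μ k) (DfieldJ μ S j)
      = fun _ i => ((μ / Real.sqrt 2) * lam) * (if j ∈ S i then 1 else 0) := by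
  funext φ i
  simp only [lieBracket, fderiv_dfieldJ, (hasFDerivAt_dfield0 lam μ k φ).fderiv,
    maskCLM, ContinuousLinearMap.pi_apply, ContinuousLinearMap.smul_apply,
    ContinuousLinearMap.proj_apply, ContinuousLinearMap.coe_smul',
    ContinuousLinearMap.coe_id', Pi.smul_apply, id_eq, Pi.sub_apply, smul_eq_mul,
    Dfield0, DfieldJ]
  split <;> ring

lemma bracket_const_DJ {n N : ℕ} (μ : ℝ) (S : Fin N → Finset (Fin n)) (j : Fin n)
    (w : Fin N → ℝ) :
    lieBracket (fun _ => w) (DfieldJ μ S j)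
      = fun _ i => ((μ / Real.sqrt 2) * if j ∈ S i then 1 else 0) * w i := by
  funext φ i
  simp only [lieBracket, fderiv_dfieldJ, fderiv_const, fderiv_const_apply, maskCLM,
    ContinuousLinearMap.pi_apply, ContinuousLinearMap.smul_apply,
    ContinuousLinearMap.proj_apply, Pi.zero_apply, ContinuousLinearMap.zero_apply,
    Pi.sub_apply, smul_eq_mul, sub_zero]

/-- The constant vector fields obtained from iterated brackets belong to every admissible `G`. -/
lemma cField_mem {n N k : ℕ} (μ lam : ℝ) (S : Fin N → Finset (Fin n))
    (G : Set (VF N))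
    (h0 : Dfield0 lam μ k ∈ G) (hD : ∀ j, DfieldJ μ S j ∈ G)
    (hbr : ∀ V ∈ G, ∀ W ∈ G, lieBracket V W ∈ G)
    (T : Finset (Fin n)) (hT : T.Nonempty) :
    (fun _ i => ((μ / Real.sqrt 2) ^ T.card * lam) * (if T ⊆ S i then 1 else 0) : VF N) ∈ G := by
  classical
  induction T using Finset.induction_on with
  | empty => exact absurd hT (by simp)
  | @insert j T hjT ih =>
    rcases T.eq_empty_or_nonempty with rfl | hTne
    · -- singleton case : [D₀, D_j]
      have hb := hbr _ h0 _ (hD j)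
      rw [bracket_D0_DJ lam μ k S j] at hb
      convert hb using 1
      funext φ i
      simp
    · have hmem := ih hTne
      have hb := hbr _ hmem _ (hD j)
      rw [bracket_const_DJ μ S j
        (fun i => ((μ / Real.sqrt 2) ^ T.card * lam) * (if T ⊆ S i then 1 else 0))] at hb
      convert hb using 1
      funext φ i
      by_cases h1 : j ∈ S i <;> by_cases h2 : T ⊆ S i <;>
        simp [Finset.card_insert_of_notMem hjT, Finset.insert_subset_iff, h1, h2] <;> ring

theorem hormander_condition
    (n k N : ℕ) (hk : 1 ≤ k) (hkn : k < n) (hN : N = n.choose k)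
    (S : Fin N → Finset (Fin n)) (hSinj : Function.Injective S)
    (hScard : ∀ i, (S i).card = k)
    (μ lam : ℝ) (hμ : μ ≠ 0) (hlam : 0 < lam) :
    ∀ φ : Fin N → ℝ,
      Submodule.span ℝ ((fun W : VF N => W φ) ''
        (⋂₀ {G : Set (VF N) |
          (∀ W ∈ G, ContDiff ℝ (⊤ : ℕ∞) W) ∧
          Dfield0 lam μ k ∈ G ∧ (∀ j : Fin n, DfieldJ μ S j ∈ G) ∧
          (∀ V ∈ G, ∀ W ∈ G, V + W ∈ G) ∧
          (∀ (a : ℝ), ∀ V ∈ G, a • V ∈ G) ∧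
          (∀ V ∈ G, ∀ W ∈ G, lieBracket V W ∈ G)})) = ⊤ := by
  classical
  intro φ
  set c : ℝ := μ / Real.sqrt 2 with hc
  have hc0 : c ≠ 0 := div_ne_zero hμ (by positivity)
  have hckl : c ^ k * lam ≠ 0 := mul_ne_zero (pow_ne_zero _ hc0) (ne_of_gt hlam)
  -- for each i₀, the constant field supported at i₀ is in the intersection
  have key : ∀ i₀ : Fin N,
      (fun _ i => (c ^ k * lam) * (if i = i₀ then 1 else 0) : VF N) ∈
      (⋂₀ {G : Set (VF N) |
          (∀ W ∈ G, ContDiff ℝ (⊤ : ℕ∞) W) ∧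
          Dfield0 lam μ k ∈ G ∧ (∀ j : Fin n, DfieldJ μ S j ∈ G) ∧
          (∀ V ∈ G, ∀ W ∈ G, V + W ∈ G) ∧
          (∀ (a : ℝ), ∀ V ∈ G, a • V ∈ G) ∧
          (∀ V ∈ G, ∀ W ∈ G, lieBracket V W ∈ G)}) := by
    intro i₀ G hG
    obtain ⟨-, h0, hD, -, -, hbr⟩ := hG
    have hTne : (S i₀).Nonempty := by
      rw [← Finset.card_pos, hScard i₀]; omega
    have := cField_mem (k := k) μ lam S G h0 hD hbr (S i₀) hTne
    have heq : (fun _ i => ((μ / Real.sqrt 2) ^ (S i₀).card * lam) *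
        (if S i₀ ⊆ S i then 1 else 0) : VF N)
        = (fun _ i => (c ^ k * lam) * (if i = i₀ then 1 else 0) : VF N) := by
      funext ψ i
      rw [hScard i₀, ← hc]
      congr 1
      have : S i₀ ⊆ S i ↔ i = i₀ := by
        constructor
        · intro h
          exact (hSinj (Finset.eq_of_subset_of_card_le h
            (by rw [hScard, hScard]))).symm
        · rintro rfl; exact Finset.Subset.refl _
      simp [this]
    rwa [heq] at this
  -- now the span is everything
  rw [eq_top_iff]
  intro v _
  have hv : v = ∑ i : Fin N, Pi.single i (v i) := (Finset.univ_sum_single v).symm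
  rw [hv]
  refine Submodule.sum_mem _ fun i _ => ?_
  have hmem : (fun j => (c ^ k * lam) * (if j = i then 1 else 0) : Fin N → ℝ) ∈
      ((fun W : VF N => W φ) '' _) := ⟨_, key i, rfl⟩
  have hspan := Submodule.subset_span (R := ℝ) hmem
  have : Pi.single i (v i) = (v i / (c ^ k * lam)) •
      (fun j => (c ^ k * lam) * (if j = i then 1 else 0) : Fin N → ℝ) := by
    funext j
    simp only [Pi.smul_apply, smul_eq_mul, Pi.single_apply]
    by_cases h : j = i
    · rw [if_pos h, if_pos h, mul_one, div_mul_cancel₀ _ hckl]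
    · rw [if_neg h, if_neg h, mul_zero, mul_zero]
  rw [this]
  exact Submodule.smul_mem _ _ hspan

end
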